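/- Let m ≥ 2 be an even integer and k a positive integer with gcd(k,m) = 1. Let α ∈ F_{2^m} be nonzero and σ an automorphism of F_{2^m}. Define f : F_{2^m} × F_{2^m} → F_{2^m} × F_{2^m} by f(x,y) = (x^(2^k+1) + α·σ(y^(2^k+1)), xy). Then f is APN (i.e., for every nonzero (a,b) and every (c,d), the equation f(X + (a,b)) + f(X) = (c,d) has at most two solutions X) if and only if α cannot be written as a^(2^k+1)·(t^(2^k)+t)^(1−σ) with a, t ∈ F_{2^m} (where (·)^(1−σ) means u/σ(u)). -/

import Mathlib

private lemma two_eq_zero' {F : Type*} [Field F] [Fintype F] {m : ℕ} (hm : m ≠ 0)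
    (hF : Fintype.card F = 2 ^ m) : (2 : F) = 0 := by
  have h := FiniteField.cast_card_eq_zero F
  rw [hF] at h
  push_cast at h
  exact pow_eq_zero_iff hm |>.mp h

private lemma charP2' {F : Type*} [Field F] [Fintype F] {m : ℕ} (hm : m ≠ 0)
    (hF : Fintype.card F = 2 ^ m) : CharP F 2 := by
  obtain ⟨p, hp⟩ := CharP.exists F
  have hne : p ≠ 0 := CharP.char_ne_zero_of_finite F p
  have hprime : p.Prime := by
    rcases CharP.char_is_prime_or_zero F p with h | h
    · exact h
    · exact absurd h hne
  have h2 : (2:F) = 0 := two_eq_zero' hm hF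
  have hdvd : p ∣ 2 := (CharP.cast_eq_zero_iff F p 2).mp h2
  have hp2 : p = 2 := (Nat.prime_dvd_prime_iff_eq hprime Nat.prime_two).mp hdvd
  exact hp2 ▸ hp

private lemma fixpt' {F : Type*} [Field F] [Fintype F] {m k : ℕ} (hm : 2 ≤ m)
    (hkm : Nat.gcd k m = 1) (hF : Fintype.card F = 2 ^ m) {z : F}
    (hz : z ^ 2 ^ k = z) : z = 0 ∨ z = 1 := by
  have h2 : (2:F) = 0 := two_eq_zero' (by omega) hF
  have hcard : ∀ x : F, x ^ 2 ^ m = x := by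
    intro x; rw [← hF]; exact FiniteField.pow_card x
  have hj : ∀ j, z ^ 2 ^ (k * j) = z := by
    intro j; induction j with
    | zero => simp
    | succ n ih => rw [Nat.mul_succ, pow_add, pow_mul, ih, hz]
  have hq : ∀ x : F, ∀ q, x ^ 2 ^ (m * q) = x := by
    intro x q; induction q with
    | zero => simp
    | succ n ih => rw [Nat.mul_succ, pow_add, pow_mul, ih, hcard]
  obtain ⟨j, hjj⟩ := Nat.exists_mul_mod_eq_one_of_coprime hkm (by omega)
  have hdm := Nat.div_add_mod (k * j) m
  have hdiv : k * j = m * (k * j / m) + 1 := by omega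
  have hz2 : z ^ 2 = z := by
    have h1 := hj j
    rw [hdiv, pow_succ, pow_mul, hq z _] at h1
    exact h1
  have hfac : z * (z - 1) = 0 := by linear_combination hz2
  rcases mul_eq_zero.mp hfac with h | h
  · exact Or.inl h
  · exact Or.inr (sub_eq_zero.mp h)

private lemma lin_solve' {F : Type*} [Field F] [Fintype F] {m k : ℕ} (hm : 2 ≤ m)
    (hkm : Nat.gcd k m = 1) (hF : Fintype.card F = 2 ^ m) {c x : F} (hc : c ≠ 0)
    (h : c * x ^ 2 ^ k + c ^ 2 ^ k * x = 0) : x = 0 ∨ x = c := by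
  have h2 : (2:F) = 0 := two_eq_zero' (by omega) hF
  have hs : (x * c⁻¹) ^ 2 ^ k = x * c⁻¹ := by
    rw [mul_pow, inv_pow]
    field_simp
    linear_combination h - (c ^ 2 ^ k * x) * h2
  rcases fixpt' hm hkm hF hs with h0 | h1
  · left
    rcases mul_eq_zero.mp h0 with h' | h'
    · exact h'
    · exact absurd h' (inv_ne_zero hc)
  · right
    field_simp at h1
    exact h1

theorem stmt_7 (m k : ℕ) (hm : 2 ≤ m) (hme : Even m) (hk : 0 < k)
    (hkm : Nat.gcd k m = 1)
    (F : Type*) [Field F] [Fintype F] (hF : Fintype.card F = 2 ^ m)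
    (α : F) (hα : α ≠ 0) (σ : F ≃+* F)
    (f : F × F → F × F)
    (hf : ∀ x y : F, f (x, y) = (x ^ (2 ^ k + 1) + α * σ (y ^ (2 ^ k + 1)), x * y)) :
    (∀ ab : F × F, ab ≠ 0 → ∀ cd : F × F,
        {X : F × F | f (X + ab) + f X = cd}.ncard ≤ 2) ↔
    ¬ ∃ a t : F, α = a ^ (2 ^ k + 1) *
        ((t ^ (2 ^ k) + t) * (σ (t ^ (2 ^ k) + t))⁻¹) := by
  have hm0 : m ≠ 0 := by omega
  have h2 : (2:F) = 0 := two_eq_zero' hm0 hF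
  haveI : Fact (Nat.Prime 2) := ⟨Nat.prime_two⟩
  haveI : CharP F 2 := charP2' hm0 hF
  have hqk : (2:ℕ) ^ k ≠ 0 := by positivity
  have hfrob : ∀ x y : F, (x + y) ^ 2 ^ k = x ^ 2 ^ k + y ^ 2 ^ k := fun x y =>
    add_pow_char_pow ..
  constructor
  · -- APN → ¬∃
    intro hAPN
    rintro ⟨A, t, heq⟩
    have hA : A ≠ 0 := by
      rintro rfl
      rw [zero_pow (by positivity), zero_mul] at heq
      exact hα heq
    have hw : t ^ 2 ^ k + t ≠ 0 := by
      intro h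
      rw [h, map_zero, inv_zero, mul_zero, mul_zero] at heq
      exact hα heq
    have ht0 : t ≠ 0 := by
      rintro rfl
      exact hw (by rw [zero_pow hqk, add_zero])
    have ht1 : t ≠ 1 := by
      rintro rfl
      exact hw (by rw [one_pow]; linear_combination h2)
    have hσw : σ (t ^ 2 ^ k + t) ≠ 0 := by
      intro h
      exact hw (σ.injective (by rw [h, map_zero]))
    have hkey : α * σ (t ^ 2 ^ k + t) = A ^ (2 ^ k + 1) * (t ^ 2 ^ k + t) := by
      rw [heq, mul_assoc, inv_mul_cancel_right₀ hσw]
    have hkey' : α * ((σ t) ^ 2 ^ k + σ t) = A ^ (2 ^ k + 1) * (t ^ 2 ^ k + t) := by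
      rw [← map_pow, ← map_add]
      exact hkey
    have h3 := hAPN (A, 1) (by simp) (f (A, 1) + f (0, 0))
    have hmem0 : ((0,0) : F × F) ∈
        {X : F × F | f (X + (A,1)) + f X = f (A,1) + f (0,0)} := by
      simp only [Set.mem_setOf_eq, Prod.mk_add_mk, zero_add]
    have hmem1 : ((A,1) : F × F) ∈
        {X : F × F | f (X + (A,1)) + f X = f (A,1) + f (0,0)} := by
      simp only [Set.mem_setOf_eq, Prod.mk_add_mk]
      rw [show A + A = (0:F) by linear_combination A * h2,
        show (1:F) + 1 = 0 by linear_combination h2]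
      exact add_comm _ _
    have hmem2 : ((A*t, t) : F × F) ∈
        {X : F × F | f (X + (A,1)) + f X = f (A,1) + f (0,0)} := by
      simp only [Set.mem_setOf_eq, Prod.mk_add_mk, hf, Prod.mk.injEq]
      constructor
      · simp only [map_add, map_mul, map_pow, map_one, map_zero, pow_succ, hfrob, one_pow, mul_pow]
        linear_combination hkey' + (A ^ 2 ^ k * t ^ 2 ^ k * A * t + α * (σ t) ^ 2 ^ k * σ t
          + A ^ 2 ^ k * t ^ 2 ^ k * A + A ^ 2 ^ k * A * t) * h2
      · linear_combination (A * t * t + A * t) * h2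
    have h3card : ({((0:F),(0:F)), (A,1), (A*t,t)} : Set (F × F)).ncard = 3 := by
      apply Set.ncard_eq_three.mpr
      refine ⟨_, _, _, ?_, ?_, ?_, rfl⟩
      · intro h; exact one_ne_zero ((Prod.ext_iff.mp h).2).symm
      · intro h; exact ht0 ((Prod.ext_iff.mp h).2).symm
      · intro h; exact ht1 ((Prod.ext_iff.mp h).2).symm
    have h33 : (3:ℕ) ≤
        ({X : F × F | f (X + (A,1)) + f X = f (A,1) + f (0,0)}).ncard := by
      rw [← h3card]
      apply Set.ncard_le_ncard _ (Set.toFinite _)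
      intro X hX
      simp only [Set.mem_insert_iff, Set.mem_singleton_iff] at hX
      rcases hX with rfl | rfl | rfl
      · exact hmem0
      · exact hmem1
      · exact hmem2
    omega
  · -- ¬∃ → APN
    intro hne ab hab cd
    obtain ⟨a, b⟩ := ab
    obtain ⟨c, d⟩ := cd
    have hker : ∀ X₁ ∈ {X : F × F | f (X + (a,b)) + f X = (c,d)},
        ∀ X₂ ∈ {X : F × F | f (X + (a,b)) + f X = (c,d)},
        X₂ = X₁ ∨ X₂ = X₁ + (a,b) := by
      rintro ⟨x₁, y₁⟩ h1 ⟨x₂, y₂⟩ hh2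
      simp only [Set.mem_setOf_eq, Prod.mk_add_mk, hf, Prod.mk.injEq] at h1 hh2
      obtain ⟨e11, e12⟩ := h1
      obtain ⟨e21, e22⟩ := hh2
      simp only [map_add, map_mul, map_pow, pow_succ, hfrob] at e11 e21
      have hK2 : a * (y₁ + y₂) + b * (x₁ + x₂) = 0 := by
        linear_combination e12 + e22 - (x₁*y₁ + x₂*y₂ + a*b - d) * h2
      have hK1 : a * (x₁ + x₂) ^ 2 ^ k + a ^ 2 ^ k * (x₁ + x₂)
          + α * (σ b * (σ y₁ + σ y₂) ^ 2 ^ k + (σ b) ^ 2 ^ k * (σ y₁ + σ y₂)) = 0 := by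
        rw [hfrob, hfrob]
        linear_combination e11 + e21 - (x₁ ^ 2 ^ k * x₁ + x₂ ^ 2 ^ k * x₂
          + α * ((σ y₁) ^ 2 ^ k * σ y₁ + (σ y₂) ^ 2 ^ k * σ y₂)
          + a ^ 2 ^ k * a + α * ((σ b) ^ 2 ^ k * σ b) - c) * h2
      by_cases hb : b = 0
      · subst hb
        have ha : a ≠ 0 := by
          rintro rfl
          exact hab (Prod.mk_eq_zero.mpr ⟨rfl, rfl⟩)
        have hv : y₁ + y₂ = 0 := by
          rcases mul_eq_zero.mp (show a * (y₁ + y₂) = 0 by linear_combination hK2)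
            with h | h
          · exact absurd h ha
          · exact h
        simp only [map_zero, zero_pow hqk, zero_mul, mul_zero, add_zero] at hK1
        rcases lin_solve' hm hkm hF ha hK1 with hu | hu
        · left
          exact Prod.ext_iff.mpr ⟨by linear_combination hu - x₁ * h2,
            by linear_combination hv - y₁ * h2⟩
        · right
          rw [Prod.mk_add_mk]
          exact Prod.ext_iff.mpr ⟨by linear_combination hu - x₁ * h2,
            by linear_combination hv - y₁ * h2⟩
      · have hσb : σ b ≠ 0 := fun h => hb (σ.injective (by rw [h, map_zero]))
        by_cases haz : a = 0
        · subst haz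
          have hu0 : x₁ + x₂ = 0 := by
            rcases mul_eq_zero.mp (show b * (x₁ + x₂) = 0 by linear_combination hK2)
              with h | h
            · exact absurd h hb
            · exact h
          simp only [zero_mul, zero_pow hqk, zero_add, add_zero] at hK1
          rcases mul_eq_zero.mp hK1 with h | h
          · exact absurd h hα
          rcases lin_solve' hm hkm hF hσb h with h' | h'
          · left
            have hv : y₁ + y₂ = 0 := σ.injective (by rw [map_add, map_zero]; exact h')
            exact Prod.ext_iff.mpr ⟨by linear_combination hu0 - x₁ * h2,
              by linear_combination hv - y₁ * h2⟩
          · right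
            have hv : y₁ + y₂ = b := σ.injective (by rw [map_add]; exact h')
            rw [Prod.mk_add_mk]
            exact Prod.ext_iff.mpr ⟨by linear_combination hu0 - x₁ * h2,
              by linear_combination hv - y₁ * h2⟩
        · -- a ≠ 0, b ≠ 0
          have ht' : y₁ + y₂ = b * ((x₁ + x₂) * a⁻¹) := by
            field_simp
            linear_combination hK2 - b * (x₁ + x₂) * h2
          set z := (x₁ + x₂) * a⁻¹ with hzdef
          have huz : x₁ + x₂ = a * z := by
            rw [hzdef]; field_simp
          have huzq : (x₁ + x₂) ^ 2 ^ k = a ^ 2 ^ k * z ^ 2 ^ k := by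
            rw [huz, mul_pow]
          have hsv : σ y₁ + σ y₂ = σ b * σ z := by
            rw [← map_add, ht', map_mul]
          have hsvq : (σ y₁ + σ y₂) ^ 2 ^ k = (σ b) ^ 2 ^ k * (σ z) ^ 2 ^ k := by
            rw [hsv, mul_pow]
          have hwz2 : a ^ 2 ^ k * a * (z ^ 2 ^ k + z)
              + α * ((σ b) ^ 2 ^ k * σ b * ((σ z) ^ 2 ^ k + σ z)) = 0 := by
            linear_combination hK1 - a * huzq - a ^ 2 ^ k * huz
              - α * (σ b) * hsvq - α * (σ b) ^ 2 ^ k * hsv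
          by_cases hwz : z ^ 2 ^ k + z = 0
          · have hzfix : z ^ 2 ^ k = z := by linear_combination hwz - z * h2
            rcases fixpt' hm hkm hF hzfix with h0 | h01
            · left
              have hu0 : x₁ + x₂ = 0 := by rw [huz, h0, mul_zero]
              have hv0 : y₁ + y₂ = 0 := by rw [ht', h0, mul_zero]
              exact Prod.ext_iff.mpr ⟨by linear_combination hu0 - x₁ * h2,
                by linear_combination hv0 - y₁ * h2⟩
            · right
              have hua : x₁ + x₂ = a := by rw [huz, h01, mul_one]
              have hvb : y₁ + y₂ = b := by rw [ht', h01, mul_one]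
              rw [Prod.mk_add_mk]
              exact Prod.ext_iff.mpr ⟨by linear_combination hua - x₁ * h2,
                by linear_combination hvb - y₁ * h2⟩
          · exfalso
            apply hne
            refine ⟨a * (σ b)⁻¹, z, ?_⟩
            have hexp : σ (z ^ 2 ^ k + z) = (σ z) ^ 2 ^ k + σ z := by
              rw [map_add, map_pow]
            have hsz : (σ z) ^ 2 ^ k + σ z ≠ 0 := by
              rw [← hexp]
              intro h
              exact hwz (σ.injective (by rw [h, map_zero]))
            rw [hexp]
            clear_value z
            rw [mul_pow, inv_pow]
            field_simp
            linear_combination hwz2 - (a ^ 2 ^ k * a * (z ^ 2 ^ k + z)) * h2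
    rcases Set.eq_empty_or_nonempty {X : F × F | f (X + (a,b)) + f X = (c,d)} with hS | hS
    · rw [hS]; simp
    · obtain ⟨X₁, hX₁⟩ := hS
      have hsub : {X : F × F | f (X + (a,b)) + f X = (c,d)} ⊆ {X₁, X₁ + (a,b)} := by
        intro X₂ hX₂
        rcases hker X₁ hX₁ X₂ hX₂ with h | h
        · exact Set.mem_insert_iff.mpr (Or.inl h)
        · exact Set.mem_insert_iff.mpr (Or.inr (by simp [h]))
      calc {X : F × F | f (X + (a,b)) + f X = (c,d)}.ncard
          ≤ ({X₁, X₁ + (a,b)} : Set (F × F)).ncard :=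
            Set.ncard_le_ncard hsub (Set.toFinite _)
        _ ≤ 2 := by
            refine le_trans (Set.ncard_insert_le _ _) ?_
            simp
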